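/- Let β ∈ (0,1) and a ≥ 0, or β = 1 and a > 1. Then ∫_0^t (t-s)^{-1/2} s^{-β} ℓ(s)^{-a} ds ≲ t^{1/2-β} ℓ(t)^{-a} if β < 1, and ≲ t^{-1/2} ℓ(t)^{1-a} if β = 1, where ℓ(s) = log(max(1/s,2)). -/

import Mathlib

open MeasureTheory Set

/-- Tamed logarithm `ℓ(t) = log(1/t ∨ 2)`. -/
noncomputable def tamedLog (t : ℝ) : ℝ := Real.log (max (1/t) 2)

lemma log_two_le_tamedLog (t : ℝ) : Real.log 2 ≤ tamedLog t :=
  Real.log_le_log two_pos (le_max_right _ _)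

lemma tamedLog_pos (t : ℝ) : 0 < tamedLog t :=
  lt_of_lt_of_le (Real.log_pos one_lt_two) (log_two_le_tamedLog t)

lemma tamedLog_anti {s t : ℝ} (hs : 0 < s) (hst : s ≤ t) : tamedLog t ≤ tamedLog s := by
  apply Real.log_le_log (lt_of_lt_of_le two_pos (le_max_right _ _))
  exact max_le_max (one_div_le_one_div_of_le hs hst) le_rfl

lemma tamedLog_of_le_half {s : ℝ} (hs0 : 0 < s) (hs : s ≤ 1/2) : tamedLog s = Real.log (1/s) := by
  unfold tamedLog
  rw [max_eq_left]
  rw [le_div_iff₀ hs0]; linarith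

lemma tamedLog_measurable : Measurable tamedLog :=
  Real.measurable_log.comp ((measurable_const.div measurable_id).max measurable_const)

lemma half_rpow_le {t c : ℝ} (ht : 0 < t) (hc : -1 ≤ c) : (t/2) ^ c ≤ 2 * t ^ c := by
  rw [Real.div_rpow ht.le (by norm_num : (0:ℝ) ≤ 2)]
  have h2c : (1/2:ℝ) ≤ (2:ℝ) ^ c := by
    have h := Real.rpow_le_rpow_of_exponent_le one_le_two hc
    rwa [Real.rpow_neg_one, show ((2:ℝ))⁻¹ = 1/2 by norm_num] at h
  have htc : 0 ≤ t ^ c := Real.rpow_nonneg ht.le c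
  have h2cpos : (0:ℝ) < (2:ℝ) ^ c := Real.rpow_pos_of_pos two_pos c
  rw [div_le_iff₀ h2cpos]
  nlinarith

/-- Integral of `s ^ (-β)` over `Ioo 0 x`. -/
lemma rpow_integral_Ioo {β x : ℝ} (hβ : β < 1) (hx : 0 < x) :
    IntegrableOn (fun s : ℝ => s ^ (-β)) (Ioo 0 x) ∧
    ∫ s in Ioo (0:ℝ) x, s ^ (-β) = x ^ (1-β) / (1-β) := by
  have h1 : IntervalIntegrable (fun u : ℝ => u ^ (-β)) volume 0 x :=
    intervalIntegral.intervalIntegrable_rpow' (by linarith)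
  have h2 : IntegrableOn (fun s : ℝ => s ^ (-β)) (Ioc 0 x) :=
    (intervalIntegrable_iff_integrableOn_Ioc_of_le hx.le).mp h1
  refine ⟨h2.congr_set_ae Ioo_ae_eq_Ioc, ?_⟩
  rw [setIntegral_congr_set Ioo_ae_eq_Ioc, ← intervalIntegral.integral_of_le hx.le,
    integral_rpow (Or.inl (by linarith)), Real.zero_rpow (by linarith),
    show -β + 1 = 1 - β by ring, sub_zero]

/-- Integral of `s⁻¹ ℓ(s)^(-a)` over `Ioo 0 x` for `x ≤ 1/2`, `a > 1`. -/
lemma log_integral_Ioo {a x : ℝ} (ha : 1 < a) (hx0 : 0 < x) (hx : x ≤ 1/2) :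
    IntegrableOn (fun s : ℝ => s ^ (-1:ℝ) * tamedLog s ^ (-a)) (Ioo 0 x) ∧
    ∫ s in Ioo (0:ℝ) x, s ^ (-1:ℝ) * tamedLog s ^ (-a)
      = Real.log (1/x) ^ (1-a) / (a-1) := by
  set c : ℝ := Real.log (1/x) with hc
  have hx2 : (2:ℝ) ≤ 1/x := by rw [le_div_iff₀ hx0]; linarith
  have hc2 : Real.log 2 ≤ c := Real.log_le_log two_pos hx2
  have hc0 : 0 < c := lt_of_lt_of_le (Real.log_pos one_lt_two) hc2
  set f : ℝ → ℝ := fun u => Real.exp (-u) with hf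
  have hf' : ∀ u ∈ Ioi c, HasDerivWithinAt f (-Real.exp (-u)) (Ioi c) u := by
    intro u _
    have h := ((Real.hasDerivAt_exp (-u)).comp u (hasDerivAt_neg u)).hasDerivWithinAt (s := Ioi c)
    rw [mul_neg_one] at h
    exact h
  have hinj : InjOn f (Ioi c) := (Real.exp_injective.comp neg_injective).injOn
  have himg : f '' Ioi c = Ioo 0 x := by
    ext y
    constructor
    · rintro ⟨u, hu, rfl⟩
      have hxc : Real.exp (-c) = x := by
        rw [hc, Real.log_div one_ne_zero hx0.ne', Real.log_one, zero_sub, neg_neg,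
          Real.exp_log hx0]
      have h2 : Real.exp (-u) < Real.exp (-c) := Real.exp_lt_exp.mpr (by simpa using hu)
      exact ⟨Real.exp_pos _, hxc ▸ h2⟩
    · rintro ⟨hy0, hyx⟩
      refine ⟨-Real.log y, ?_, by simp [f, Real.exp_log hy0]⟩
      rw [mem_Ioi, hc, Real.log_div one_ne_zero hx0.ne', Real.log_one, zero_sub]
      exact neg_lt_neg (Real.log_lt_log hy0 hyx)
  set g : ℝ → ℝ := fun s => s ^ (-1:ℝ) * tamedLog s ^ (-a) with hg
  have hcongr : ∀ u ∈ Ioi c, |(-Real.exp (-u))| • g (f u) = u ^ (-a) := by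
    intro u hu
    have hcu : c < u := hu
    have h2u : (2:ℝ) ≤ Real.exp u := by
      calc (2:ℝ) = Real.exp (Real.log 2) := (Real.exp_log two_pos).symm
      _ ≤ Real.exp u := Real.exp_le_exp.mpr (by linarith)
    have h1 : tamedLog (Real.exp (-u)) = u := by
      unfold tamedLog
      rw [one_div, ← Real.exp_neg, neg_neg, max_eq_left h2u, Real.log_exp]
    simp only [g, f, smul_eq_mul, abs_neg, abs_of_pos (Real.exp_pos _), h1,
      Real.rpow_neg_one]
    rw [← mul_assoc, mul_inv_cancel₀ (Real.exp_pos _).ne', one_mul]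
  have hint : IntegrableOn (fun u : ℝ => u ^ (-a)) (Ioi c) :=
    integrableOn_Ioi_rpow_of_lt (by linarith) hc0
  constructor
  · rw [← himg, integrableOn_image_iff_integrableOn_abs_deriv_smul measurableSet_Ioi hf' hinj]
    exact (integrableOn_congr_fun hcongr measurableSet_Ioi).mpr hint
  · rw [← himg, integral_image_eq_integral_abs_deriv_smul measurableSet_Ioi hf' hinj,
      setIntegral_congr_fun measurableSet_Ioi hcongr,
      integral_Ioi_rpow_of_lt (by linarith) hc0]
    rw [div_eq_div_iff (by linarith) (by linarith)]
    ring_nf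

/-- Integral of `(t-s) ^ (-1/2)` over `Ico (t/2) t`. -/
lemma sub_rpow_integral_Ico {t : ℝ} (ht : 0 < t) :
    IntegrableOn (fun s : ℝ => (t - s) ^ (-(1/2):ℝ)) (Ico (t/2) t) ∧
    ∫ s in Ico (t/2) t, (t - s) ^ (-(1/2):ℝ) = 2 * (t/2) ^ ((1:ℝ)/2) := by
  have h1 : IntervalIntegrable (fun u : ℝ => u ^ (-(1/2):ℝ)) volume 0 (t/2) :=
    intervalIntegral.intervalIntegrable_rpow' (by norm_num)
  have h2 := h1.comp_sub_left t
  have e1 : t - t/2 = t/2 := by ring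
  have e2 : t - 0 = t := by ring
  rw [e1, e2] at h2
  have h3 : IntegrableOn (fun s : ℝ => (t - s) ^ (-(1/2):ℝ)) (Ioc (t/2) t) :=
    (intervalIntegrable_iff_integrableOn_Ioc_of_le (by linarith)).mp h2.symm
  refine ⟨h3.congr_set_ae Ico_ae_eq_Ioc, ?_⟩
  rw [setIntegral_congr_set Ico_ae_eq_Ioc, ← intervalIntegral.integral_of_le (by linarith),
    intervalIntegral.integral_comp_sub_left (fun u : ℝ => u ^ (-(1/2):ℝ)) t, e1, sub_self,
    integral_rpow (Or.inl (by norm_num))]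
  rw [Real.zero_rpow (by norm_num)]
  norm_num
  ring

/-- Let `β ∈ (0,1)` and `a ≥ 0`, or `β = 1` and `a > 1`. Then for
`t ∈ (0,1]` the integral `∫_0^t (t-s)^{-1/2} s^{-β} ℓ(s)^{-a} ds` is finite and bounded by
`C t^{1/2-β} ℓ(t)^{-a}` if `β < 1`, and by `C t^{-1/2} ℓ(t)^{1-a}` if `β = 1`. -/
theorem stmt11 (β a : ℝ)
    (hcase : (0 < β ∧ β < 1 ∧ 0 ≤ a) ∨ (β = 1 ∧ 1 < a)) :
    ∃ C > (0:ℝ), ∀ t ∈ Ioc (0:ℝ) 1,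
      IntegrableOn
        (fun s : ℝ => (t - s) ^ (-(1/2 : ℝ)) * s ^ (-β) * tamedLog s ^ (-a))
        (Ioo 0 t) ∧
      (∫ s in Ioo (0:ℝ) t, (t - s) ^ (-(1/2 : ℝ)) * s ^ (-β) * tamedLog s ^ (-a))
        ≤ C * (if β < 1 then t ^ (1/2 - β) * tamedLog t ^ (-a)
               else t ^ (-(1/2 : ℝ)) * tamedLog t ^ (1 - a)) := by
  have hmf : ∀ t : ℝ, Measurable
      (fun s : ℝ => (t - s) ^ (-(1/2 : ℝ)) * s ^ (-β) * tamedLog s ^ (-a)) := by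
    intro t
    have h := tamedLog_measurable
    fun_prop
  obtain ⟨hβ0, hβ1, ha0⟩ | ⟨hβe, ha1⟩ := hcase
  · -- case β < 1
    have h1β : (0:ℝ) < 1 - β := by linarith
    refine ⟨2 * (1/(1-β) + 2), by positivity, fun t ht => ?_⟩
    obtain ⟨ht0, ht1⟩ := ht
    have ht2 : 0 < t/2 := by linarith
    have htt : t/2 < t := by linarith
    have hL : 0 < tamedLog t := tamedLog_pos t
    have hLa : (0:ℝ) ≤ tamedLog t ^ (-a) := Real.rpow_nonneg hL.le _
    set f : ℝ → ℝ := fun s => (t - s) ^ (-(1/2 : ℝ)) * s ^ (-β) * tamedLog s ^ (-a) with hfdef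
    set g₁ : ℝ → ℝ := fun s => (t/2) ^ (-(1/2):ℝ) * s ^ (-β) * tamedLog t ^ (-a) with hg1
    set g₂ : ℝ → ℝ := fun s => (t - s) ^ (-(1/2):ℝ) * (t/2) ^ (-β) * tamedLog t ^ (-a) with hg2
    have hrint := rpow_integral_Ioo hβ1 ht2
    have hsint := sub_rpow_integral_Ico ht0
    have hig1 : IntegrableOn g₁ (Ioo 0 (t/2)) :=
      (hrint.1.const_mul ((t/2) ^ (-(1/2):ℝ))).mul_const (tamedLog t ^ (-a))
    have hig2 : IntegrableOn g₂ (Ico (t/2) t) :=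
      (hsint.1.mul_const ((t/2) ^ (-β))).mul_const (tamedLog t ^ (-a))
    have hle1 : ∀ s ∈ Ioo 0 (t/2), f s ≤ g₁ s := by
      intro s hs
      obtain ⟨hs0, hs2⟩ := hs
      have e1 : (t - s) ^ (-(1/2):ℝ) ≤ (t/2) ^ (-(1/2):ℝ) :=
        Real.rpow_le_rpow_of_nonpos ht2 (by linarith) (by norm_num)
      have e2 : tamedLog s ^ (-a) ≤ tamedLog t ^ (-a) :=
        Real.rpow_le_rpow_of_nonpos hL (tamedLog_anti hs0 (by linarith)) (by linarith)
      have hsa : (0:ℝ) ≤ s ^ (-β) := Real.rpow_nonneg hs0.le _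
      exact mul_le_mul (mul_le_mul_of_nonneg_right e1 hsa) e2
        (Real.rpow_nonneg (tamedLog_pos s).le _)
        (mul_nonneg (Real.rpow_nonneg ht2.le _) hsa)
    have hle2 : ∀ s ∈ Ico (t/2) t, f s ≤ g₂ s := by
      intro s hs
      obtain ⟨hs1, hs2⟩ := hs
      have hs0 : 0 < s := lt_of_lt_of_le ht2 hs1
      have e1 : s ^ (-β) ≤ (t/2) ^ (-β) :=
        Real.rpow_le_rpow_of_nonpos ht2 hs1 (by linarith)
      have e2 : tamedLog s ^ (-a) ≤ tamedLog t ^ (-a) :=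
        Real.rpow_le_rpow_of_nonpos hL (tamedLog_anti hs0 (by linarith)) (by linarith)
      have hts : (0:ℝ) ≤ (t - s) ^ (-(1/2):ℝ) := Real.rpow_nonneg (by linarith) _
      exact mul_le_mul (mul_le_mul_of_nonneg_left e1 hts) e2
        (Real.rpow_nonneg (tamedLog_pos s).le _)
        (mul_nonneg hts (Real.rpow_nonneg ht2.le _))
    have hfnn : ∀ s ∈ Ioo (0:ℝ) t, 0 ≤ f s := by
      intro s hs
      exact mul_nonneg (mul_nonneg (Real.rpow_nonneg (by linarith [hs.2]) _)
        (Real.rpow_nonneg hs.1.le _)) (Real.rpow_nonneg (tamedLog_pos s).le _)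
    have hif1 : IntegrableOn f (Ioo 0 (t/2)) := by
      refine Integrable.mono' hig1 ((hmf t).aestronglyMeasurable.restrict) ?_
      refine (ae_restrict_iff' measurableSet_Ioo).mpr (ae_of_all _ fun s hs => ?_)
      rw [Real.norm_of_nonneg (hfnn s ⟨hs.1, hs.2.trans htt⟩)]
      exact hle1 s hs
    have hif2 : IntegrableOn f (Ico (t/2) t) := by
      refine Integrable.mono' hig2 ((hmf t).aestronglyMeasurable.restrict) ?_
      refine (ae_restrict_iff' measurableSet_Ico).mpr (ae_of_all _ fun s hs => ?_)
      rw [Real.norm_of_nonneg (hfnn s ⟨lt_of_lt_of_le ht2 hs.1, hs.2⟩)]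
      exact hle2 s hs
    have hu : Ioo (0:ℝ) (t/2) ∪ Ico (t/2) t = Ioo 0 t := Ioo_union_Ico_eq_Ioo ht2 htt.le
    have hdisj : Disjoint (Ioo (0:ℝ) (t/2)) (Ico (t/2) t) :=
      Set.disjoint_left.mpr fun s hs hs' => absurd (hs.2.trans_le hs'.1) (lt_irrefl s)
    have hint : IntegrableOn f (Ioo 0 t) := by rw [← hu]; exact hif1.union hif2
    refine ⟨hint, ?_⟩
    rw [if_pos hβ1, ← hu, setIntegral_union hdisj measurableSet_Ico hif1 hif2]
    have hI1 : ∫ s in Ioo (0:ℝ) (t/2), f s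
        ≤ (t/2) ^ (-(1/2):ℝ) * ((t/2) ^ (1-β) / (1-β)) * tamedLog t ^ (-a) := by
      calc ∫ s in Ioo (0:ℝ) (t/2), f s ≤ ∫ s in Ioo (0:ℝ) (t/2), g₁ s :=
            setIntegral_mono_on hif1 hig1 measurableSet_Ioo hle1
        _ = (t/2) ^ (-(1/2):ℝ) * (∫ s in Ioo (0:ℝ) (t/2), s ^ (-β)) * tamedLog t ^ (-a) := by
            rw [hg1]
            rw [integral_mul_const, integral_const_mul]
        _ = _ := by rw [hrint.2]
    have hI2 : ∫ s in Ico (t/2) t, f s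
        ≤ 2 * (t/2) ^ ((1:ℝ)/2) * (t/2) ^ (-β) * tamedLog t ^ (-a) := by
      calc ∫ s in Ico (t/2) t, f s ≤ ∫ s in Ico (t/2) t, g₂ s :=
            setIntegral_mono_on hif2 hig2 measurableSet_Ico hle2
        _ = (∫ s in Ico (t/2) t, (t - s) ^ (-(1/2):ℝ)) * (t/2) ^ (-β) * tamedLog t ^ (-a) := by
            rw [hg2, integral_mul_const, integral_mul_const]
        _ = _ := by rw [hsint.2]
    set P : ℝ := (t/2) ^ (1/2 - β : ℝ) with hP
    set Q : ℝ := t ^ (1/2 - β : ℝ) with hQ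
    have k1 : (t/2) ^ (-(1/2):ℝ) * (t/2) ^ ((1:ℝ)-β) = P := by
      rw [hP, show (1/2 - β : ℝ) = -(1/2) + (1-β) by ring, Real.rpow_add ht2]
    have k2 : (t/2) ^ ((1:ℝ)/2) * (t/2) ^ (-β) = P := by
      rw [hP, show (1/2 - β : ℝ) = (1:ℝ)/2 + -β by ring, Real.rpow_add ht2]
    have hPQ : P ≤ 2 * Q := half_rpow_le ht0 (by linarith)
    have hQnn : (0:ℝ) ≤ Q := Real.rpow_nonneg ht0.le _
    have hPnn : (0:ℝ) ≤ P := Real.rpow_nonneg ht2.le _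
    have hI1' : ∫ s in Ioo (0:ℝ) (t/2), f s ≤ P / (1-β) * tamedLog t ^ (-a) := by
      refine hI1.trans_eq ?_
      rw [← k1]; ring
    have hI2' : ∫ s in Ico (t/2) t, f s ≤ 2 * P * tamedLog t ^ (-a) := by
      refine hI2.trans_eq ?_
      rw [← k2]; ring
    have hPL : P * tamedLog t ^ (-a) ≤ 2 * Q * tamedLog t ^ (-a) :=
      mul_le_mul_of_nonneg_right hPQ hLa
    have hfin : P / (1-β) * tamedLog t ^ (-a) + 2 * P * tamedLog t ^ (-a)
        ≤ 2 * (1/(1-β) + 2) * (Q * tamedLog t ^ (-a)) := by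
      have hinv : (0:ℝ) < 1/(1-β) := by positivity
      have e : P / (1-β) * tamedLog t ^ (-a) = 1/(1-β) * (P * tamedLog t ^ (-a)) := by ring
      have e2 : 2 * (1/(1-β) + 2) * (Q * tamedLog t ^ (-a))
          = 1/(1-β) * (2 * Q * tamedLog t ^ (-a)) + 4 * (Q * tamedLog t ^ (-a)) := by ring
      rw [e, e2]
      have h1 := mul_le_mul_of_nonneg_left hPL hinv.le
      linarith
    calc (∫ s in Ioo (0:ℝ) (t/2), f s) + ∫ s in Ico (t/2) t, f s
        ≤ P / (1-β) * tamedLog t ^ (-a) + 2 * P * tamedLog t ^ (-a) := add_le_add hI1' hI2'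
      _ ≤ _ := hfin
  · -- case β = 1
    subst hβe
    have hl2 : (0:ℝ) < Real.log 2 := Real.log_pos one_lt_two
    have ha1' : (0:ℝ) < a - 1 := by linarith
    refine ⟨2 * (1/(a-1) + 2/Real.log 2), by positivity, fun t ht => ?_⟩
    obtain ⟨ht0, ht1⟩ := ht
    have ht2 : 0 < t/2 := by linarith
    have htt : t/2 < t := by linarith
    have hth : t/2 ≤ 1/2 := by linarith
    have hL : 0 < tamedLog t := tamedLog_pos t
    have hLa : (0:ℝ) ≤ tamedLog t ^ (-a) := Real.rpow_nonneg hL.le _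
    set f : ℝ → ℝ := fun s => (t - s) ^ (-(1/2 : ℝ)) * s ^ (-1:ℝ) * tamedLog s ^ (-a) with hfdef
    set g₁ : ℝ → ℝ := fun s => (t/2) ^ (-(1/2):ℝ) * (s ^ (-1:ℝ) * tamedLog s ^ (-a)) with hg1
    set g₂ : ℝ → ℝ := fun s => (t - s) ^ (-(1/2):ℝ) * (t/2) ^ (-1:ℝ) * tamedLog t ^ (-a) with hg2
    have hlint := log_integral_Ioo ha1 ht2 hth
    have hsint := sub_rpow_integral_Ico ht0
    have hig1 : IntegrableOn g₁ (Ioo 0 (t/2)) := hlint.1.const_mul _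
    have hig2 : IntegrableOn g₂ (Ico (t/2) t) := (hsint.1.mul_const _).mul_const _
    have hle1 : ∀ s ∈ Ioo 0 (t/2), f s ≤ g₁ s := by
      intro s hs
      obtain ⟨hs0, hs2⟩ := hs
      have e1 : (t - s) ^ (-(1/2):ℝ) ≤ (t/2) ^ (-(1/2):ℝ) :=
        Real.rpow_le_rpow_of_nonpos ht2 (by linarith) (by norm_num)
      calc f s = (t - s) ^ (-(1/2):ℝ) * (s ^ (-1:ℝ) * tamedLog s ^ (-a)) := by
            rw [hfdef]; ring
        _ ≤ g₁ s := mul_le_mul_of_nonneg_right e1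
            (mul_nonneg (Real.rpow_nonneg hs0.le _) (Real.rpow_nonneg (tamedLog_pos s).le _))
    have hle2 : ∀ s ∈ Ico (t/2) t, f s ≤ g₂ s := by
      intro s hs
      obtain ⟨hs1, hs2⟩ := hs
      have hs0 : 0 < s := lt_of_lt_of_le ht2 hs1
      have e1 : s ^ (-1:ℝ) ≤ (t/2) ^ (-1:ℝ) :=
        Real.rpow_le_rpow_of_nonpos ht2 hs1 (by norm_num)
      have e2 : tamedLog s ^ (-a) ≤ tamedLog t ^ (-a) :=
        Real.rpow_le_rpow_of_nonpos hL (tamedLog_anti hs0 (by linarith)) (by linarith)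
      have hts : (0:ℝ) ≤ (t - s) ^ (-(1/2):ℝ) := Real.rpow_nonneg (by linarith) _
      exact mul_le_mul (mul_le_mul_of_nonneg_left e1 hts) e2
        (Real.rpow_nonneg (tamedLog_pos s).le _)
        (mul_nonneg hts (Real.rpow_nonneg ht2.le _))
    have hfnn : ∀ s ∈ Ioo (0:ℝ) t, 0 ≤ f s := by
      intro s hs
      exact mul_nonneg (mul_nonneg (Real.rpow_nonneg (by linarith [hs.2]) _)
        (Real.rpow_nonneg hs.1.le _)) (Real.rpow_nonneg (tamedLog_pos s).le _)
    have hif1 : IntegrableOn f (Ioo 0 (t/2)) := by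
      refine Integrable.mono' hig1 ((hmf t).aestronglyMeasurable.restrict) ?_
      refine (ae_restrict_iff' measurableSet_Ioo).mpr (ae_of_all _ fun s hs => ?_)
      rw [Real.norm_of_nonneg (hfnn s ⟨hs.1, hs.2.trans htt⟩)]
      exact hle1 s hs
    have hif2 : IntegrableOn f (Ico (t/2) t) := by
      refine Integrable.mono' hig2 ((hmf t).aestronglyMeasurable.restrict) ?_
      refine (ae_restrict_iff' measurableSet_Ico).mpr (ae_of_all _ fun s hs => ?_)
      rw [Real.norm_of_nonneg (hfnn s ⟨lt_of_lt_of_le ht2 hs.1, hs.2⟩)]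
      exact hle2 s hs
    have hu : Ioo (0:ℝ) (t/2) ∪ Ico (t/2) t = Ioo 0 t := Ioo_union_Ico_eq_Ioo ht2 htt.le
    have hdisj : Disjoint (Ioo (0:ℝ) (t/2)) (Ico (t/2) t) :=
      Set.disjoint_left.mpr fun s hs hs' => absurd (hs.2.trans_le hs'.1) (lt_irrefl s)
    have hint : IntegrableOn f (Ioo 0 t) := by rw [← hu]; exact hif1.union hif2
    refine ⟨hint, ?_⟩
    rw [if_neg (lt_irrefl (1:ℝ)), ← hu, setIntegral_union hdisj measurableSet_Ico hif1 hif2]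
    have hlog_half : Real.log (1/(t/2)) = tamedLog (t/2) := (tamedLog_of_le_half ht2 hth).symm
    have hI1 : ∫ s in Ioo (0:ℝ) (t/2), f s
        ≤ (t/2) ^ (-(1/2):ℝ) * (tamedLog (t/2) ^ (1-a) / (a-1)) := by
      calc ∫ s in Ioo (0:ℝ) (t/2), f s ≤ ∫ s in Ioo (0:ℝ) (t/2), g₁ s :=
            setIntegral_mono_on hif1 hig1 measurableSet_Ioo hle1
        _ = (t/2) ^ (-(1/2):ℝ) * ∫ s in Ioo (0:ℝ) (t/2), s ^ (-1:ℝ) * tamedLog s ^ (-a) := by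
            rw [hg1, integral_const_mul]
        _ = _ := by rw [hlint.2, hlog_half]
    have hI2 : ∫ s in Ico (t/2) t, f s
        ≤ 2 * (t/2) ^ ((1:ℝ)/2) * (t/2) ^ (-1:ℝ) * tamedLog t ^ (-a) := by
      calc ∫ s in Ico (t/2) t, f s ≤ ∫ s in Ico (t/2) t, g₂ s :=
            setIntegral_mono_on hif2 hig2 measurableSet_Ico hle2
        _ = (∫ s in Ico (t/2) t, (t - s) ^ (-(1/2):ℝ)) * (t/2) ^ (-1:ℝ) * tamedLog t ^ (-a) := by
            rw [hg2, integral_mul_const, integral_mul_const]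
        _ = _ := by rw [hsint.2]
    set P : ℝ := (t/2) ^ (-(1/2):ℝ) with hP
    set Q : ℝ := t ^ (-(1/2):ℝ) with hQ
    set M : ℝ := tamedLog t ^ (1-a) with hM
    have k2 : (t/2) ^ ((1:ℝ)/2) * (t/2) ^ (-1:ℝ) = P := by
      rw [hP, show (-(1/2):ℝ) = (1:ℝ)/2 + (-1:ℝ) by norm_num, Real.rpow_add ht2]
    have hPQ : P ≤ 2 * Q := half_rpow_le ht0 (by norm_num)
    have hQnn : (0:ℝ) ≤ Q := Real.rpow_nonneg ht0.le _
    have hPnn : (0:ℝ) ≤ P := Real.rpow_nonneg ht2.le _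
    have hMnn : (0:ℝ) ≤ M := Real.rpow_nonneg hL.le _
    have hmono : tamedLog (t/2) ^ (1-a) ≤ M := by
      rw [hM]
      exact Real.rpow_le_rpow_of_nonpos hL (tamedLog_anti ht2 htt.le) (by linarith)
    have hI1' : ∫ s in Ioo (0:ℝ) (t/2), f s ≤ P * (M / (a-1)) := by
      refine hI1.trans ?_
      exact mul_le_mul_of_nonneg_left ((div_le_div_iff_of_pos_right ha1').mpr hmono) hPnn
    have hI2' : ∫ s in Ico (t/2) t, f s ≤ 2 * P * tamedLog t ^ (-a) := by
      refine hI2.trans_eq ?_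
      rw [← k2]; ring
    have hLM : tamedLog t ^ (-a) * Real.log 2 ≤ M := by
      have e : M = tamedLog t ^ (-a) * tamedLog t := by
        rw [hM, show (1:ℝ) - a = -a + 1 by ring, Real.rpow_add hL, Real.rpow_one]
      calc tamedLog t ^ (-a) * Real.log 2 ≤ tamedLog t ^ (-a) * tamedLog t :=
            mul_le_mul_of_nonneg_left (log_two_le_tamedLog t) hLa
        _ = M := e.symm
    have hfin : P * (M / (a-1)) + 2 * P * tamedLog t ^ (-a)
        ≤ 2 * (1/(a-1) + 2/Real.log 2) * (Q * M) := by
      have h1 : P * (M / (a-1)) ≤ 2 * Q * (M / (a-1)) :=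
        mul_le_mul_of_nonneg_right hPQ (by positivity)
      have h2 : tamedLog t ^ (-a) ≤ M / Real.log 2 := (le_div_iff₀ hl2).mpr hLM
      have h3 : 2 * P * tamedLog t ^ (-a) ≤ 2 * (2 * Q) * (M / Real.log 2) :=
        mul_le_mul (by linarith) h2 hLa (by positivity)
      have e : 2 * Q * (M / (a-1)) + 2 * (2 * Q) * (M / Real.log 2)
          = 2 * (1/(a-1) + 2/Real.log 2) * (Q * M) := by
        field_simp
      linarith
    calc (∫ s in Ioo (0:ℝ) (t/2), f s) + ∫ s in Ico (t/2) t, f s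
        ≤ P * (M / (a-1)) + 2 * P * tamedLog t ^ (-a) := add_le_add hI1' hI2'
      _ ≤ _ := hfin
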